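/- Let P = M ⋉ N be a semidirect product of locally profinite groups with N normal, and let U ⊆ P be an open compact subgroup decomposed as U = U_M ⋉ U_N where U_M = U ∩ M and U_N = U ∩ N. Then integration along the fibers of P → M, f ↦ (m ↦ ∫_N f(mn) dn) (with Haar measures giving U, U_M, U_N volume 1), defines a ring homomorphism r_M : H(P,U) → H(M,U_M), and r_M([UαU]) = Σᵢ [ᾱᵢ U_M] where UαU = ⊔ᵢ αᵢU and ᾱᵢ is the image of αᵢ in M. -/

import Mathlib

open scoped Pointwise
open MeasureTheory

/-!
STATEMENT 5: Let `P = M ⋉ N` be a semidirect product of locally profinite groups with `N`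
normal, and let `U ⊆ P` be open compact and decomposed, `U = U_M ⋉ U_N` with `U_M = U ∩ M`,
`U_N = U ∩ N`.  Then integration along the fibers of `P → M`, `f ↦ (m ↦ ∫_N f(mn) dn)`
(Haar measures giving `U`, `U_M`, `U_N` volume 1), defines a ring homomorphism
`r_M : H(P,U) → H(M,U_M)`, and `r_M([UαU]) = Σᵢ [ᾱᵢ U_M]` where `UαU = ⊔ᵢ αᵢU` and `ᾱᵢ` is
the image of `αᵢ` in `M`.
-/

/-- A compactly supported, `U`-bi-invariant, ℤ-valued function (an element of `H(P,U)`). -/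
def IsHeckeFunction {P : Type*} [Group P] [TopologicalSpace P] (U : Subgroup P)
    (f : P → ℤ) : Prop :=
  HasCompactSupport f ∧ ∀ u₁ ∈ U, ∀ u₂ ∈ U, ∀ g : P, f (u₁ * g * u₂) = f g

/-- Convolution with respect to a measure. -/
noncomputable def heckeConv {P : Type*} [Group P] [MeasurableSpace P]
    (μ : Measure P) (f₁ f₂ : P → ℝ) : P → ℝ :=
  fun g => ∫ x, f₁ x * f₂ (x⁻¹ * g) ∂μ

/-- Integration along the fibers of `P → M`. -/
noncomputable def fiberInt {P : Type*} [Group P] (M N : Subgroup P)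
    [MeasurableSpace ↥N] (μN : Measure ↥N) (f : P → ℝ) : ↥M → ℝ :=
  fun x => ∫ y : ↥N, f ((x : P) * (y : P)) ∂μN

theorem stmt_5 {P : Type*} [Group P] [TopologicalSpace P] [IsTopologicalGroup P]
    [LocallyCompactSpace P] [TotallyDisconnectedSpace P] [T2Space P]
    [MeasurableSpace P] [BorelSpace P]
    (M N : Subgroup P) [N.Normal] (hMclosed : IsClosed (M : Set P))
    (hNclosed : IsClosed (N : Set P))
    -- `P = M ⋉ N`: `N` and `M` are complementary, so every `p ∈ P` is uniquely `n * m`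
    (hcompl : Subgroup.IsComplement' N M)
    -- the projection `π : P → M` killing `N` and restricting to the identity on `M`
    (π : P →* ↥M) (hπM : ∀ x : ↥M, π (x : P) = x) (hπN : ∀ x ∈ N, π x = 1)
    (U : Subgroup P) (hUopen : IsOpen (U : Set P)) (hUcompact : IsCompact (U : Set P))
    -- `U` is decomposed: `U = U_M ⋉ U_N`
    (hUdec : ∀ u ∈ U, ∃ x ∈ (U : Set P) ∩ (M : Set P), ∃ y ∈ (U : Set P) ∩ (N : Set P),
      u = x * y)
    -- left Haar measures on `P`, `M`, `N` giving `U`, `U_M`, `U_N` volume 1 …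
    (μ : Measure P) [μ.IsMulLeftInvariant] [IsFiniteMeasureOnCompacts μ]
    (hμU : μ (U : Set P) = 1)
    (μM : Measure ↥M) [μM.IsMulLeftInvariant] [IsFiniteMeasureOnCompacts μM]
    (hμM : μM {x : ↥M | (x : P) ∈ U} = 1)
    (μN : Measure ↥N) [μN.IsMulLeftInvariant] [IsFiniteMeasureOnCompacts μN]
    (hμN : μN {y : ↥N | (y : P) ∈ U} = 1)
    -- … satisfying `∫_P f(p) dp = ∫_M ∫_N f(mn) dn dm`
    (hFubini : ∀ f : P → ℝ, Continuous f → HasCompactSupport f →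
      ∫ p, f p ∂μ = ∫ x : ↥M, (∫ y : ↥N, f ((x : P) * (y : P)) ∂μN) ∂μM) :
    -- `r_M` is multiplicative on Hecke functions (it is clearly additive), …
    (∀ f₁ f₂ : P → ℤ, IsHeckeFunction U f₁ → IsHeckeFunction U f₂ →
      ∀ x : ↥M,
        heckeConv μM (fiberInt M N μN fun p => (f₁ p : ℝ))
            (fiberInt M N μN fun p => (f₂ p : ℝ)) x =
          fiberInt M N μN (heckeConv μ (fun p => (f₁ p : ℝ)) fun p => (f₂ p : ℝ)) x) ∧
    -- … it sends the unit `[U]` to the unit `[U_M]`, …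
    (∀ x : ↥M,
      fiberInt M N μN (Set.indicator (U : Set P) fun _ => (1 : ℝ)) x =
        Set.indicator {z : ↥M | (z : P) ∈ U} (fun _ => (1 : ℝ)) x) ∧
    -- … and for `α ∈ P` with `UαU = ⊔ᵢ αᵢ U` one has `r_M([UαU]) = Σᵢ [ᾱᵢ U_M]`
    (∀ (α : P) {m : ℕ} (a : Fin m → P),
      ((U : Set P) * {α} * (U : Set P) = ⋃ i, a i • (U : Set P)) →
      Pairwise (Function.onFun Disjoint fun i => a i • (U : Set P)) →
      ∀ x : ↥M,
        fiberInt M N μN (Set.indicator ((U : Set P) * {α} * (U : Set P)) fun _ => (1 : ℝ)) x =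
          ∑ i, Set.indicator {z : ↥M | (z : P) ∈ U} (fun _ => (1 : ℝ)) ((π (a i))⁻¹ * x)) := by

  classical
  have hNormal : N.Normal := ‹N.Normal›
  have hNemb : Topology.IsClosedEmbedding ((↑) : ↥N → P) :=
    hNclosed.isClosedEmbedding_subtypeVal
  have hcoeN : Continuous ((↑) : ↥N → P) := continuous_subtype_val
  haveI : OpensMeasurableSpace ↥N := Subtype.opensMeasurableSpace (N : Set P)
  haveI : MeasurableMul ↥N := by
    refine ⟨fun c => ?_, fun c => ?_⟩
    · exact ((continuous_const.mul hcoeN).measurable).subtype_mk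
    · exact ((hcoeN.mul continuous_const).measurable).subtype_mk
  -- measurability of translated membership sets in `↥N`
  have hmeasSet : ∀ (g : P) (s : Set P), IsOpen s →
      MeasurableSet ((fun n : ↥N => g * (n : P)) ⁻¹' s) :=
    fun g s hs => ((continuous_const.mul hcoeN).measurable) hs.measurableSet
  have hcptSet : ∀ (g : P) (s : Set P), IsCompact s →
      μN ((fun n : ↥N => g * (n : P)) ⁻¹' s) < ⊤ := by
    intro g s hs
    have h1 : ((fun n : ↥N => g * (n : P)) ⁻¹' s) = ((↑) : ↥N → P) ⁻¹' (g⁻¹ • s) := by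
      ext n
      simp [Set.mem_smul_set_iff_inv_smul_mem, smul_eq_mul]
    rw [h1]
    exact (hNemb.isCompact_preimage (hs.smul g⁻¹)).measure_lt_top
  -- the basic fiber integral computation
  have core : ∀ y : ↥M,
      (∫ n : ↥N, Set.indicator (U : Set P) (fun _ => (1 : ℝ)) ((y : P) * (n : P)) ∂μN)
        = Set.indicator {z : ↥M | (z : P) ∈ U} (fun _ => (1 : ℝ)) y := by
    intro y
    have hrw : (fun n : ↥N => Set.indicator (U : Set P) (fun _ => (1 : ℝ)) ((y : P) * (n : P)))
        = Set.indicator ((fun n : ↥N => (y : P) * (n : P)) ⁻¹' (U : Set P))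
            (fun _ => (1 : ℝ)) := by
      funext n
      simp only [Set.indicator_apply, Set.mem_preimage]
    rw [hrw, integral_indicator_const (1 : ℝ) (hmeasSet _ _ hUopen)]
    by_cases hy : (y : P) ∈ U
    · have hset : ((fun n : ↥N => (y : P) * (n : P)) ⁻¹' (U : Set P))
          = {n : ↥N | (n : P) ∈ U} := by
        ext n
        constructor
        · intro h
          have h2 : (y : P)⁻¹ * ((y : P) * (n : P)) ∈ U := mul_mem (inv_mem hy) h
          simpa [← mul_assoc] using h2
        · intro h
          exact mul_mem hy h
      rw [hset, measureReal_def, hμN, Set.indicator_of_mem (show y ∈ {z : ↥M | (z : P) ∈ U} from hy)]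
      simp
    · have hset : ((fun n : ↥N => (y : P) * (n : P)) ⁻¹' (U : Set P)) = (∅ : Set ↥N) := by
        ext n
        simp only [Set.mem_preimage, Set.mem_empty_iff_false, iff_false, SetLike.mem_coe]
        intro h
        obtain ⟨xm, ⟨hxU, hxM⟩, yn, ⟨hyU, hyN⟩, heq⟩ := hUdec _ h
        have h1 : π ((y : P) * (n : P)) = y := by
          rw [map_mul, hπM y, hπN _ n.2, mul_one]
        have h2 : π ((y : P) * (n : P)) = (⟨xm, hxM⟩ : ↥M) := by
          rw [heq, map_mul, hπN _ hyN, mul_one]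
          exact hπM ⟨xm, hxM⟩
        apply hy
        have h3 : (y : P) = xm := congrArg Subtype.val (h1.symm.trans h2)
        rw [h3]
        exact hxU
      rw [hset]
      rw [Set.indicator_of_notMem (show y ∉ {z : ↥M | (z : P) ∈ U} from hy)]
      simp
  -- the key computation : `∫_N 1_{aU} (x n) dn = 1_{U_M}((π a)⁻¹ x)`
  have keyA : ∀ (a : P) (x : ↥M),
      (∫ n : ↥N, Set.indicator (a • (U : Set P)) (fun _ => (1 : ℝ)) ((x : P) * (n : P)) ∂μN)
        = Set.indicator {z : ↥M | (z : P) ∈ U} (fun _ => (1 : ℝ)) ((π a)⁻¹ * x) := by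
    intro a x
    obtain ⟨⟨na, ma⟩, hdec⟩ := (hcompl.existsUnique a).exists
    have hna : (na : P) ∈ N := na.2
    have hma : (ma : P) ∈ M := ma.2
    have hπa : π a = ⟨ma, hma⟩ := by
      rw [← hdec, map_mul, hπN _ hna, one_mul]
      exact hπM ⟨ma, hma⟩
    have hc : (x : P)⁻¹ * (na : P)⁻¹ * (x : P) ∈ N := by
      have := hNormal.conj_mem _ (inv_mem hna) (x : P)⁻¹
      simpa [mul_assoc] using this
    have harg : ∀ n : ↥N, a⁻¹ * ((x : P) * (n : P))
        = (((π a)⁻¹ * x : ↥M) : P) * (((⟨_, hc⟩ * n : ↥N)) : P) := by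
      intro n
      rw [hπa, ← hdec]
      push_cast
      group
    have hxy : ∀ n : ↥N,
        Set.indicator (a • (U : Set P)) (fun _ => (1 : ℝ)) ((x : P) * (n : P))
          = Set.indicator (U : Set P) (fun _ => (1 : ℝ))
              ((((π a)⁻¹ * x : ↥M) : P) * (((⟨_, hc⟩ * n : ↥N)) : P)) := by
      intro n
      have hiff : ((x : P) * (n : P) ∈ a • (U : Set P)) ↔
          ((((π a)⁻¹ * x : ↥M) : P) * (((⟨_, hc⟩ * n : ↥N)) : P) ∈ (U : Set P)) := by
        rw [Set.mem_smul_set_iff_inv_smul_mem, smul_eq_mul, harg n]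
      by_cases h : (x : P) * (n : P) ∈ a • (U : Set P)
      · rw [Set.indicator_of_mem h, Set.indicator_of_mem (hiff.1 h)]
      · rw [Set.indicator_of_notMem h, Set.indicator_of_notMem (fun hh => h (hiff.2 hh))]
    calc (∫ n : ↥N, Set.indicator (a • (U : Set P)) (fun _ => (1 : ℝ)) ((x : P) * (n : P)) ∂μN)
        = ∫ n : ↥N, Set.indicator (U : Set P) (fun _ => (1 : ℝ))
            ((((π a)⁻¹ * x : ↥M) : P) * (((⟨_, hc⟩ * n : ↥N)) : P)) ∂μN :=
          integral_congr_ae (Filter.Eventually.of_forall hxy)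
      _ = ∫ n : ↥N, Set.indicator (U : Set P) (fun _ => (1 : ℝ))
            ((((π a)⁻¹ * x : ↥M) : P) * (n : P)) ∂μN :=
          integral_mul_left_eq_self
            (fun n : ↥N => Set.indicator (U : Set P) (fun _ => (1 : ℝ))
              ((((π a)⁻¹ * x : ↥M) : P) * (n : P))) _
      _ = _ := core ((π a)⁻¹ * x)
  -- integrability of the translated indicators
  have indint : ∀ (a0 : P) (x : ↥M),
      Integrable (fun n : ↥N =>
        Set.indicator (a0 • (U : Set P)) (fun _ => (1 : ℝ)) ((x : P) * (n : P))) μN := by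
    intro a0 x
    have hrw : (fun n : ↥N =>
        Set.indicator (a0 • (U : Set P)) (fun _ => (1 : ℝ)) ((x : P) * (n : P)))
        = Set.indicator ((fun n : ↥N => (x : P) * (n : P)) ⁻¹' (a0 • (U : Set P)))
            (fun _ => (1 : ℝ)) := by
      funext n
      simp only [Set.indicator_apply, Set.mem_preimage]
    rw [hrw]
    refine (integrable_indicator_iff (hmeasSet _ _ (hUopen.smul a0))).2 ?_
    exact integrableOn_const (hcptSet _ _ (hUcompact.smul a0)).ne
  refine ⟨?_, ?_, ?_⟩
  · -- multiplicativity
    intro f₁ f₂ hf₁ hf₂ x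
    set g₁ : P → ℝ := fun p => (f₁ p : ℝ) with hg₁
    set g₂ : P → ℝ := fun p => (f₂ p : ℝ) with hg₂
    have contHecke : ∀ (f : P → ℤ), IsHeckeFunction U f → Continuous (fun p => (f p : ℝ)) := by
      intro f hf
      apply IsLocallyConstant.continuous
      rw [IsLocallyConstant.iff_exists_open]
      intro p
      refine ⟨p • (U : Set P), hUopen.smul p, ⟨1, U.one_mem, mul_one p⟩, ?_⟩
      intro q hq
      obtain ⟨u, hu, hq'⟩ := hq
      have h1 : f (p * u) = f p := by
        have := hf.2 1 U.one_mem u hu p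
        simpa using this
      rw [← hq']
      show ((f (p * u) : ℤ) : ℝ) = ((f p : ℤ) : ℝ)
      exact_mod_cast congrArg (fun z : ℤ => (z : ℝ)) h1
    have hcsR : ∀ (f : P → ℤ), IsHeckeFunction U f →
        HasCompactSupport (fun p => (f p : ℝ)) := by
      intro f hf
      have h : (fun p => ((f p : ℤ) : ℝ)) = (fun z : ℤ => (z : ℝ)) ∘ f := rfl
      rw [h]
      exact hf.1.comp_left (by simp)
    have cont₁ : Continuous g₁ := contHecke f₁ hf₁
    have cont₂ : Continuous g₂ := contHecke f₂ hf₂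
    have hcs₁ : HasCompactSupport g₁ := hcsR f₁ hf₁
    have hcs₂ : HasCompactSupport g₂ := hcsR f₂ hf₂
    have hinv₂ : ∀ u ∈ U, ∀ g : P, g₂ (u * g) = g₂ g := by
      intro u hu g
      have h1 : f₂ (u * g) = f₂ g := by
        have := hf₂.2 u hu 1 U.one_mem g
        simpa using this
      show ((f₂ (u * g) : ℤ) : ℝ) = ((f₂ g : ℤ) : ℝ)
      exact_mod_cast congrArg (fun z : ℤ => (z : ℝ)) h1
    set K : P → ℝ := fun p => ∫ n : ↥N, g₂ (p⁻¹ * (x : P) * (n : P)) ∂μN with hK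
    have contK : Continuous K := by
      apply IsLocallyConstant.continuous
      rw [IsLocallyConstant.iff_exists_open]
      intro p
      refine ⟨p • (U : Set P), hUopen.smul p, ⟨1, U.one_mem, mul_one p⟩, ?_⟩
      intro q hq
      obtain ⟨u, hu, hq'⟩ := hq
      rw [← hq']
      show (∫ n : ↥N, g₂ ((p * u)⁻¹ * (x : P) * (n : P)) ∂μN) = K p
      rw [hK]
      refine integral_congr_ae (Filter.Eventually.of_forall fun n => ?_)
      have harg : (p * u)⁻¹ * (x : P) * (n : P) = u⁻¹ * (p⁻¹ * (x : P) * (n : P)) := by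
        group
      show g₂ ((p * u)⁻¹ * (x : P) * (n : P)) = g₂ (p⁻¹ * (x : P) * (n : P))
      rw [harg, hinv₂ u⁻¹ (inv_mem hu)]
    have claim : ∀ (z : ↥M) (n' : ↥N),
        K ((z : P) * (n' : P)) = fiberInt M N μN g₂ (z⁻¹ * x) := by
      intro z n'
      have hc' : ((x : P)⁻¹ * (z : P)) * (n' : P)⁻¹ * ((z : P)⁻¹ * (x : P)) ∈ N := by
        have := hNormal.conj_mem _ (inv_mem n'.2) ((x : P)⁻¹ * (z : P))
        simpa [mul_assoc, mul_inv_rev] using this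
      have harg : ∀ n : ↥N, ((z : P) * (n' : P))⁻¹ * (x : P) * (n : P)
          = (((z⁻¹ * x : ↥M)) : P) * (((⟨_, hc'⟩ * n : ↥N)) : P) := by
        intro n
        push_cast
        group
      calc K ((z : P) * (n' : P))
          = ∫ n : ↥N, g₂ ((((z⁻¹ * x : ↥M)) : P) * (((⟨_, hc'⟩ * n : ↥N)) : P)) ∂μN := by
            rw [hK]
            exact integral_congr_ae
              (Filter.Eventually.of_forall fun n => congrArg g₂ (harg n))
        _ = ∫ n : ↥N, g₂ ((((z⁻¹ * x : ↥M)) : P) * (n : P)) ∂μN :=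
            integral_mul_left_eq_self
              (fun n : ↥N => g₂ (((z⁻¹ * x : ↥M) : P) * (n : P))) _
        _ = fiberInt M N μN g₂ (z⁻¹ * x) := rfl
    have contG : Continuous (fun p => g₁ p * K p) := cont₁.mul contK
    have suppG : HasCompactSupport (fun p => g₁ p * K p) := hcs₁.mul_right
    -- the compact-support swap
    have hswap : (∫ p : P, ∫ n : ↥N, g₁ p * g₂ (p⁻¹ * (x : P) * (n : P)) ∂μN ∂μ)
        = ∫ n : ↥N, ∫ p : P, g₁ p * g₂ (p⁻¹ * (x : P) * (n : P)) ∂μ ∂μN := by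
      apply integral_integral_swap_of_hasCompactSupport
      · exact (cont₁.comp continuous_fst).mul
          (cont₂.comp (((continuous_fst.inv).mul continuous_const).mul
            (hcoeN.comp continuous_snd)))
      · have hD : IsCompact ((x : P)⁻¹ • (tsupport g₁ * tsupport g₂)) :=
          (hcs₁.mul hcs₂).smul (x : P)⁻¹
        have hC : IsCompact (((↑) : ↥N → P) ⁻¹'
            ((x : P)⁻¹ • (tsupport g₁ * tsupport g₂))) :=
          hNemb.isCompact_preimage hD
        apply HasCompactSupport.intro (hcs₁.prod hC)
        rintro ⟨p, n⟩ hpn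
        show g₁ p * g₂ (p⁻¹ * (x : P) * (n : P)) = 0
        by_cases hp : p ∈ tsupport g₁
        · have hn : n ∉ ((↑) : ↥N → P) ⁻¹' ((x : P)⁻¹ • (tsupport g₁ * tsupport g₂)) :=
            fun hn => hpn (Set.mk_mem_prod hp hn)
          have hz : g₂ (p⁻¹ * (x : P) * (n : P)) = 0 := by
            by_contra h0
            apply hn
            have hmem : p⁻¹ * (x : P) * (n : P) ∈ tsupport g₂ := subset_tsupport _ h0
            show (n : P) ∈ (x : P)⁻¹ • (tsupport g₁ * tsupport g₂)
            have hrep : (n : P) = (x : P)⁻¹ • (p * (p⁻¹ * (x : P) * (n : P))) := by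
              rw [smul_eq_mul]
              group
            rw [hrep]
            exact Set.smul_mem_smul_set (Set.mul_mem_mul hp hmem)
          rw [hz, mul_zero]
        · rw [image_eq_zero_of_notMem_tsupport hp, zero_mul]
    calc heckeConv μM (fiberInt M N μN g₁) (fiberInt M N μN g₂) x
        = ∫ z : ↥M, (∫ n' : ↥N, g₁ ((z : P) * (n' : P)) ∂μN)
            * fiberInt M N μN g₂ (z⁻¹ * x) ∂μM := rfl
      _ = ∫ z : ↥M, ∫ n' : ↥N,
            g₁ ((z : P) * (n' : P)) * K ((z : P) * (n' : P)) ∂μN ∂μM := by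
          refine integral_congr_ae (Filter.Eventually.of_forall fun z => ?_)
          show (∫ n' : ↥N, g₁ ((z : P) * (n' : P)) ∂μN) * fiberInt M N μN g₂ (z⁻¹ * x)
              = ∫ n' : ↥N, g₁ ((z : P) * (n' : P)) * K ((z : P) * (n' : P)) ∂μN
          rw [← integral_mul_const]
          refine integral_congr_ae (Filter.Eventually.of_forall fun n' => ?_)
          show g₁ ((z : P) * (n' : P)) * fiberInt M N μN g₂ (z⁻¹ * x)
              = g₁ ((z : P) * (n' : P)) * K ((z : P) * (n' : P))
          rw [claim z n']
      _ = ∫ p : P, g₁ p * K p ∂μ := (hFubini _ contG suppG).symm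
      _ = ∫ p : P, ∫ n : ↥N, g₁ p * g₂ (p⁻¹ * (x : P) * (n : P)) ∂μN ∂μ := by
          refine integral_congr_ae (Filter.Eventually.of_forall fun p => ?_)
          show g₁ p * K p = ∫ n : ↥N, g₁ p * g₂ (p⁻¹ * (x : P) * (n : P)) ∂μN
          rw [hK]
          exact (integral_const_mul (g₁ p) _).symm
      _ = ∫ n : ↥N, ∫ p : P, g₁ p * g₂ (p⁻¹ * (x : P) * (n : P)) ∂μ ∂μN := hswap
      _ = fiberInt M N μN (heckeConv μ g₁ g₂) x := by
          refine integral_congr_ae (Filter.Eventually.of_forall fun n => ?_)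
          show (∫ p : P, g₁ p * g₂ (p⁻¹ * (x : P) * (n : P)) ∂μ)
              = ∫ p : P, g₁ p * g₂ (p⁻¹ * ((x : P) * (n : P))) ∂μ
          exact integral_congr_ae (Filter.Eventually.of_forall fun p =>
            congrArg (fun w => g₁ p * g₂ w) (mul_assoc _ _ _))
  · -- the unit
    intro x
    exact core x
  · -- double cosets
    intro α m a hcover hdisj x
    have hpt : ∀ n : ↥N,
        Set.indicator ((U : Set P) * {α} * (U : Set P)) (fun _ => (1 : ℝ))
            ((x : P) * (n : P))
          = ∑ i, Set.indicator (a i • (U : Set P)) (fun _ => (1 : ℝ))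
              ((x : P) * (n : P)) := by
      intro n
      rw [hcover]
      by_cases hq : (x : P) * (n : P) ∈ ⋃ i, a i • (U : Set P)
      · obtain ⟨i, hi⟩ := Set.mem_iUnion.1 hq
        rw [Set.indicator_of_mem hq]
        rw [Finset.sum_eq_single i (fun j _ hj => ?_) (fun h => absurd (Finset.mem_univ i) h)]
        · rw [Set.indicator_of_mem hi]
        · exact Set.indicator_of_notMem
            (fun hqj => (Set.disjoint_left.1 (hdisj hj)) hqj hi) _
      · rw [Set.indicator_of_notMem hq]
        symm
        apply Finset.sum_eq_zero
        intro i _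
        exact Set.indicator_of_notMem
          (fun hqi => hq (Set.mem_iUnion.2 ⟨i, hqi⟩)) _
    calc fiberInt M N μN
          (Set.indicator ((U : Set P) * {α} * (U : Set P)) fun _ => (1 : ℝ)) x
        = ∫ n : ↥N, ∑ i, Set.indicator (a i • (U : Set P)) (fun _ => (1 : ℝ))
            ((x : P) * (n : P)) ∂μN :=
          integral_congr_ae (Filter.Eventually.of_forall hpt)
      _ = ∑ i, ∫ n : ↥N, Set.indicator (a i • (U : Set P)) (fun _ => (1 : ℝ))
            ((x : P) * (n : P)) ∂μN :=
          integral_finset_sum _ (fun i _ => indint (a i) x)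
      _ = ∑ i, Set.indicator {z : ↥M | (z : P) ∈ U} (fun _ => (1 : ℝ)) ((π (a i))⁻¹ * x) :=
          Finset.sum_congr rfl (fun i _ => keyA (a i) x)
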